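/- Let T be a triangulated category with coproducts and G a perfect set of objects of T. Then every G in G is weak compact with respect to any direct tower whose connecting maps are (Σ^{-1}G ∪ G)-phantoms: if Z_0 → Z_1 → Z_2 → ⋯ has all connecting maps φ_i satisfying T(G', φ_i) = 0 for all G' in Σ^{-1}G ∪ G, then T(G, hocolim Z_i) = 0. -/

import Mathlib

open CategoryTheory CategoryTheory.Limits CategoryTheory.Pretriangulated

universe u

variable {T : Type u} [Category.{u} T] [Preadditive T] [HasZeroObject T]
  [HasShift T ℤ] [∀ n : ℤ, (shiftFunctor T n).Additive] [Pretriangulated T]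
  [HasCoproducts.{u} T] [HasCoproducts.{0} T]

/-- A set `G` of objects is perfect: whenever a family of maps `X_i ⟶ Y_i` induces
surjections `T(g, X_i) → T(g, Y_i)` for all `g ∈ G`, the induced map on coproducts
`T(g, ∐X_i) → T(g, ∐Y_i)` is surjective for all `g ∈ G`. -/
def IsPerfect (G : Set T) : Prop :=
  ∀ (ι : Type u) (X Y : ι → T) (f : ∀ i, X i ⟶ Y i),
    (∀ g ∈ G, ∀ i, ∀ a : g ⟶ Y i, ∃ b : g ⟶ X i, b ≫ f i = a) →
    ∀ g ∈ G, ∀ a : g ⟶ ∐ Y, ∃ b : g ⟶ ∐ X, b ≫ Limits.Sigma.map f = a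

/-- Key lemma: if all the connecting maps `φ i` are `G`-phantoms, then any map from
`g ∈ G` into `∐ Z` composes to zero with `Sigma.desc (fun i => φ i ≫ Sigma.ι Z (i+1))`. -/
lemma key_phantom_coprod (G : Set T) (hG : IsPerfect G)
    (Z : ℕ → T) (φ : ∀ i, Z i ⟶ Z (i + 1))
    (hφ : ∀ i, ∀ g' ∈ G, ∀ a : g' ⟶ Z i, a ≫ φ i = 0)
    (g : T) (hg : g ∈ G) (b : g ⟶ ∐ Z) :
    b ≫ Sigma.desc (fun i => φ i ≫ Sigma.ι Z (i + 1)) = 0 := by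
  -- choose fibers of the connecting maps
  have hW : ∀ i, ∃ (W : T) (w : W ⟶ Z i) (h : Z (i+1) ⟶ W⟦(1:ℤ)⟧),
      Triangle.mk w (φ i) h ∈ distTriang T := fun i =>
    distinguished_cocone_triangle₁ (φ i)
  choose W w h hdist using hW
  -- maps from g' ∈ G lift along w i
  have hsurj : ∀ g' ∈ G, ∀ i, ∀ a : g' ⟶ Z i, ∃ c : g' ⟶ W i, c ≫ w i = a := by
    intro g' hg' i a
    obtain ⟨c, hc⟩ := Triangle.coyoneda_exact₂ _ (hdist i) a (hφ i g' hg' a)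
    exact ⟨c, hc.symm⟩
  -- transfer to ULift ℕ to apply perfectness
  let e : ULift.{u} ℕ ≃ ℕ := Equiv.ulift
  have hsurj' : ∀ g' ∈ G, ∀ i : ULift.{u} ℕ,
      ∀ a : g' ⟶ Z i.down, ∃ c : g' ⟶ W i.down, c ≫ w i.down = a :=
    fun g' hg' i a => hsurj g' hg' i.down a
  obtain ⟨c, hc⟩ := hG (ULift.{u} ℕ) (fun i => W i.down) (Z ∘ ⇑e)
    (fun i => w i.down) hsurj' g hg (b ≫ (Sigma.reindex e Z).inv)
  have hb : b = (b ≫ (Sigma.reindex e Z).inv) ≫ (Sigma.reindex e Z).hom := by simp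
  rw [hb, ← hc, Category.assoc, Category.assoc]
  have : Limits.Sigma.map (g := Z ∘ ⇑e) (fun i : ULift.{u} ℕ => w i.down) ≫ (Sigma.reindex e Z).hom ≫
      Sigma.desc (fun i => φ i ≫ Sigma.ι Z (i + 1)) = 0 := by
    ext i
    have h0 : w i.down ≫ φ i.down = 0 := comp_distTriang_mor_zero₁₂ _ (hdist i.down)
    have h1 := Sigma.ι_reindex_hom_assoc e Z i
      (Limits.Sigma.desc fun j => φ j ≫ Sigma.ι Z (j + 1))
    rw [colimit.ι_desc] at h1
    dsimp at h1
    erw [comp_zero, Sigma.ι_map_assoc]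
    erw [h1]
    dsimp [e]
    change w i.down ≫ φ i.down ≫ Sigma.ι Z (i.down + 1) = 0
    rw [← Category.assoc, h0, zero_comp]
  rw [this, comp_zero]

/-- if `G` is a perfect set of objects, then every `g ∈ G` is weak
compact with respect to any direct tower whose connecting maps are
`(Σ⁻¹G ∪ G)`-phantoms. -/
theorem perfect_weak_compact (G : Set T) (hG : IsPerfect G) :
    ∀ g ∈ G, ∀ (Z : ℕ → T) (φ : ∀ i, Z i ⟶ Z (i + 1)),
      (∀ i, ∀ g' ∈ G, (∀ a : g' ⟶ Z i, a ≫ φ i = 0) ∧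
        (∀ a : (g'⟦(-1 : ℤ)⟧ : T) ⟶ Z i, a ≫ φ i = 0)) →
      ∀ (L : T) (p : (∐ Z : T) ⟶ L) (q : L ⟶ (∐ Z : T)⟦(1 : ℤ)⟧),
        (Triangle.mk
          (𝟙 (∐ Z) - Sigma.desc (fun i => φ i ≫ Sigma.ι Z (i + 1))) p q
          ∈ distTriang T) →
        ∀ a : g ⟶ L, a = 0 := by
  intro g hg Z φ hφ L p q hT a
  set d : (∐ Z : T) ⟶ ∐ Z := Sigma.desc (fun i => φ i ≫ Sigma.ι Z (i + 1)) with hd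
  -- Step 1: maps from g into ∐ Z kill d
  have key1 : ∀ b : g ⟶ ∐ Z, b ≫ d = 0 :=
    key_phantom_coprod G hG Z φ (fun i g' hg' => (hφ i g' hg').1) g hg
  -- Step 2: the shifted family is also G-phantom
  have hφ1 : ∀ i, ∀ g' ∈ G, ∀ a : g' ⟶ (Z i)⟦(1:ℤ)⟧, a ≫ (φ i)⟦(1:ℤ)⟧' = 0 := by
    intro i g' hg' a
    have hnat := (shiftFunctorCompIsoId T (1:ℤ) (-1:ℤ) (by norm_num)).hom.naturality (φ i)
    simp only [Functor.comp_map, Functor.id_map, Functor.comp_obj, Functor.id_obj] at hnat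
    -- hnat : ((φ i)⟦1⟧')⟦-1⟧' ≫ iso.app (Z (i+1)) = iso.app (Z i) ≫ φ i
    have h0 := (hφ i g' hg').2
      (a⟦(-1:ℤ)⟧' ≫ (shiftFunctorCompIsoId T (1:ℤ) (-1:ℤ) (by norm_num)).hom.app (Z i))
    rw [Category.assoc, ← hnat, ← Category.assoc] at h0
    have h1 : a⟦(-1:ℤ)⟧' ≫ ((φ i)⟦(1:ℤ)⟧')⟦(-1:ℤ)⟧' = 0 := by
      have := h0 =≫ (shiftFunctorCompIsoId T (1:ℤ) (-1:ℤ) (by norm_num)).inv.app (Z (i+1))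
      simpa using this
    apply (shiftFunctor T (-1:ℤ)).map_injective
    rw [Functor.map_comp, Functor.map_zero]
    exact h1
  -- Step 3: maps from g into (∐ Z)⟦1⟧ kill d⟦1⟧
  have key2 : ∀ x : g ⟶ (∐ Z : T)⟦(1:ℤ)⟧, x ≫ d⟦(1:ℤ)⟧' = 0 := by
    intro x
    have : PreservesColimitsOfSize.{0,0} (shiftFunctor T (1:ℤ)) :=
      Adjunction.isEquivalence_preservesColimits _
    let σ : (∐ (fun i => (Z i)⟦(1:ℤ)⟧) : T) ⟶ (∐ Z : T)⟦(1:ℤ)⟧ :=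
      sigmaComparison (shiftFunctor T (1:ℤ)) Z
    have hσ : IsIso σ := inferInstance
    have hcomm : σ ≫ d⟦(1:ℤ)⟧' =
        Sigma.desc (fun i => (φ i)⟦(1:ℤ)⟧' ≫ Sigma.ι (fun j => (Z j)⟦(1:ℤ)⟧) (i + 1)) ≫ σ := by
      ext i
      simp only [ι_comp_sigmaComparison_assoc, colimit.ι_desc_assoc, Cofan.mk_ι_app,
        Category.assoc, ι_comp_sigmaComparison, σ, hd]
      rw [← Functor.map_comp, colimit.ι_desc, Cofan.mk_ι_app, Functor.map_comp]
    have hx : x = (x ≫ inv σ) ≫ σ := by simp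
    rw [hx, Category.assoc, hcomm, ← Category.assoc]
    rw [key_phantom_coprod G hG (fun i => (Z i)⟦(1:ℤ)⟧) (fun i => (φ i)⟦(1:ℤ)⟧')
      (fun i g' hg' => hφ1 i g' hg') g hg (x ≫ inv σ), zero_comp]
  -- Conclude
  have hq : a ≫ q = 0 := by
    have h31 := comp_distTriang_mor_zero₃₁ _ hT
    change q ≫ (𝟙 (∐ Z : T) - d)⟦(1:ℤ)⟧' = 0 at h31
    -- q ≫ (𝟙 - d)⟦1⟧ = 0
    have h2 : a ≫ q ≫ (𝟙 (∐ Z : T) - d)⟦(1:ℤ)⟧' = 0 := by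
      rw [h31, comp_zero]
    rw [Functor.map_sub, CategoryTheory.Functor.map_id, Preadditive.comp_sub,
      Preadditive.comp_sub, Category.comp_id, ← Category.assoc, key2 (a ≫ q), sub_zero] at h2
    exact h2
  obtain ⟨b, hb⟩ := Triangle.coyoneda_exact₃ _ hT a hq
  have h12 := comp_distTriang_mor_zero₁₂ _ hT
  change g ⟶ ∐ Z at b
  change a = b ≫ p at hb
  change (𝟙 (∐ Z : T) - d) ≫ p = 0 at h12
  have hbf : b ≫ (𝟙 (∐ Z : T) - d) = b := by
    rw [Preadditive.comp_sub, Category.comp_id, key1 b, sub_zero]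
  calc a = b ≫ p := hb
    _ = (b ≫ (𝟙 (∐ Z : T) - d)) ≫ p := by rw [hbf]
    _ = b ≫ (𝟙 (∐ Z : T) - d) ≫ p := by rw [Category.assoc]
    _ = 0 := by rw [h12, comp_zero]
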